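/- arXiv:2501.00111 — 2 statements merged into one kernel-verified Lean document; each statement's English description precedes it below -/
import Mathlib

section
/- A pair (a, b) of nonnegative integers is a Parikh vector of a binary string ω (i.e., some contiguous substring of ω contains exactly a zeros and b ones) if and only if a + b ≤ |ω| and T_min1(a+b) ≤ b ≤ T_max1(a+b), where T_min1(l) and T_max1(l) are the minimum and maximum numbers of ones over length-l substrings of ω (and (0,0) is always a Parikh vector via the empty substring). -/
def onesIn (w : List Bool) (i l : ℕ) : ℕ := ((w.drop i).take l).count true
def zerosIn (w : List Bool) (i l : ℕ) : ℕ := ((w.drop i).take l).count false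

def Tmax1 (w : List Bool) (l : ℕ) : ℕ :=
  (Finset.range (w.length - l + 1)).sup (fun i => onesIn w i l)
def Tmin1 (w : List Bool) (l : ℕ) : ℕ :=
  (Finset.range (w.length - l + 1)).inf' (Finset.nonempty_range_iff.mpr (Nat.succ_ne_zero _))
    (fun i => onesIn w i l)

/-- `(a, b)` is a Parikh vector of `w`: some contiguous substring has exactly
`a` zeros and `b` ones. -/
def IsParikhVector (w : List Bool) (a b : ℕ) : Prop :=
  ∃ i : ℕ, i + (a + b) ≤ w.length ∧ zerosIn w i (a + b) = a ∧ onesIn w i (a + b) = b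

def prefOnes (w : List Bool) (m : ℕ) : ℕ := (w.take m).count true

lemma pref_add (w : List Bool) (i l : ℕ) :
    prefOnes w (i + l) = prefOnes w i + onesIn w i l := by
  simp [prefOnes, onesIn, List.take_add, List.count_append]

lemma onesIn_le (w : List Bool) (i l : ℕ) : onesIn w i l ≤ l :=
  le_trans List.count_le_length (List.length_take_le _ _)

lemma step_both (w : List Bool) (l k : ℕ) :
    onesIn w (k+1) l ≤ onesIn w k l + 1 ∧ onesIn w k l ≤ onesIn w (k+1) l + 1 := by
  have h1 := pref_add w k l
  have h2 := pref_add w (k+1) l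
  have hA := pref_add w k 1
  have hB := pref_add w (k+l) 1
  have eA := onesIn_le w k 1
  have eB := onesIn_le w (k+l) 1
  have hc : k + 1 + l = k + l + 1 := by omega
  rw [hc] at h2
  omega

lemma ivt_up (f : ℕ → ℕ) (b : ℕ) (hstep : ∀ k, f (k+1) ≤ f k + 1) :
    ∀ d x, f x ≤ b → b ≤ f (x + d) → ∃ z, x ≤ z ∧ z ≤ x + d ∧ f z = b := by
  intro d
  induction d with
  | zero => intro x h1 h2; exact ⟨x, le_refl _, le_refl _, le_antisymm h1 h2⟩
  | succ d ih =>
    intro x h1 h2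
    rcases eq_or_lt_of_le h1 with he | hlt
    · exact ⟨x, le_refl _, Nat.le_add_right _ _, he⟩
    · have hx1 : f (x+1) ≤ b := le_trans (hstep x) hlt
      have hc : x + 1 + d = x + (d+1) := by omega
      obtain ⟨z, hz1, hz2, hz3⟩ := ih (x+1) hx1 (by rw [hc]; exact h2)
      exact ⟨z, by omega, by omega, hz3⟩

lemma ivt_down (f : ℕ → ℕ) (b : ℕ) (hstep : ∀ k, f k ≤ f (k+1) + 1) :
    ∀ d x, b ≤ f x → f (x + d) ≤ b → ∃ z, x ≤ z ∧ z ≤ x + d ∧ f z = b := by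
  intro d
  induction d with
  | zero => intro x h1 h2; exact ⟨x, le_refl _, le_refl _, le_antisymm h2 h1⟩
  | succ d ih =>
    intro x h1 h2
    rcases eq_or_lt_of_le h1 with he | hlt
    · exact ⟨x, le_refl _, Nat.le_add_right _ _, he.symm⟩
    · have hx1 : b ≤ f (x+1) := by have := hstep x; omega
      have hc : x + 1 + d = x + (d+1) := by omega
      obtain ⟨z, hz1, hz2, hz3⟩ := ih (x+1) hx1 (by rw [hc]; exact h2)
      exact ⟨z, by omega, by omega, hz3⟩

lemma count_tf (s : List Bool) : s.count true + s.count false = s.length := by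
  induction s with
  | nil => simp
  | cons c t ih => cases c <;> simp [List.count_cons] <;> omega

theorem parikh_iff_interval (w : List Bool) (a b : ℕ) :
    IsParikhVector w a b ↔
      a + b ≤ w.length ∧ Tmin1 w (a + b) ≤ b ∧ b ≤ Tmax1 w (a + b) := by
  constructor
  · rintro ⟨i, hi, hz, ho⟩
    have hlen : a + b ≤ w.length := by omega
    have hmem : i ∈ Finset.range (w.length - (a+b) + 1) := Finset.mem_range.mpr (by omega)
    refine ⟨hlen, ?_, ?_⟩
    · unfold Tmin1
      calc _ ≤ onesIn w i (a+b) := Finset.inf'_le _ hmem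
        _ = b := ho
    · unfold Tmax1
      calc b = onesIn w i (a+b) := ho.symm
        _ ≤ _ := Finset.le_sup (f := fun i => onesIn w i (a+b)) hmem
  · rintro ⟨hlen, hmin, hmax⟩
    unfold Tmin1 at hmin
    unfold Tmax1 at hmax
    obtain ⟨imin, hmm, hminEq⟩ := Finset.exists_mem_eq_inf'
      (s := Finset.range (w.length - (a+b) + 1))
      (Finset.nonempty_range_iff.mpr (Nat.succ_ne_zero _)) (fun i => onesIn w i (a+b))
    obtain ⟨imax, hMM, hmaxEq⟩ := Finset.exists_mem_eq_sup
      (Finset.range (w.length - (a+b) + 1))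
      (Finset.nonempty_range_iff.mpr (Nat.succ_ne_zero _)) (fun i => onesIn w i (a+b))
    have h1 : onesIn w imin (a+b) ≤ b := hminEq ▸ hmin
    have h2 : b ≤ onesIn w imax (a+b) := hmaxEq ▸ hmax
    have hminR := Finset.mem_range.mp hmm
    have hmaxR := Finset.mem_range.mp hMM
    have hz : ∃ z, z ≤ w.length - (a+b) ∧ onesIn w z (a+b) = b := by
      rcases le_total imin imax with hle | hle
      · obtain ⟨z, _, hz2, hz3⟩ := ivt_up (fun i => onesIn w i (a+b)) b
          (fun k => (step_both w (a+b) k).1) (imax - imin) imin h1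
          (by rw [Nat.add_sub_cancel' hle]; exact h2)
        exact ⟨z, by omega, hz3⟩
      · obtain ⟨z, _, hz2, hz3⟩ := ivt_down (fun i => onesIn w i (a+b)) b
          (fun k => (step_both w (a+b) k).2) (imin - imax) imax h2
          (by rw [Nat.add_sub_cancel' hle]; exact h1)
        exact ⟨z, by omega, hz3⟩
    obtain ⟨z, hz1, hz2⟩ := hz
    have hzl : z + (a + b) ≤ w.length := by omega
    refine ⟨z, hzl, ?_, hz2⟩
    have hlt : ((w.drop z).take (a+b)).length = a + b := by
      rw [List.length_take, List.length_drop]; omega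
    have := count_tf ((w.drop z).take (a+b))
    unfold zerosIn
    unfold onesIn at hz2
    omega
end

section
/- Every binary string ω of length n has a unique 1-prefix normal form: there exists exactly one 1-prefix normal word ω' of length n such that for every 1 ≤ l ≤ n, the maximum number of 1s over length-l substrings of ω' equals the maximum number of 1s over length-l substrings of ω. -/
def maxOnes (w : List Bool) (l : ℕ) : ℕ :=
  (Finset.range (w.length - l + 1)).sup (fun i => onesIn w i l)

def IsPrefixNormal (w : List Bool) : Prop :=
  ∀ l, 1 ≤ l → l ≤ w.length → (w.take l).count true = maxOnes w l

lemma onesIn_split (w : List Bool) (i a b : ℕ) :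
    onesIn w i (a + b) = onesIn w i a + onesIn w (i + a) b := by
  unfold onesIn
  rw [List.take_add, List.count_append, List.drop_drop]

lemma onesIn_mono (w : List Bool) (i : ℕ) {a b : ℕ} (h : a ≤ b) :
    onesIn w i a ≤ onesIn w i b := by
  unfold onesIn
  have : (w.drop i).take a = ((w.drop i).take b).take a := by
    rw [List.take_take, min_eq_left h]
  rw [this]
  exact (List.take_sublist _ _).count_le _

lemma le_maxOnes (w : List Bool) {i l : ℕ} (h : i + l ≤ w.length) :
    onesIn w i l ≤ maxOnes w l := by
  unfold maxOnes
  exact Finset.le_sup (f := fun i => onesIn w i l) (Finset.mem_range.mpr (by omega))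

lemma maxOnes_le (w : List Bool) {l : ℕ} (m : ℕ)
    (h : ∀ i, i + l ≤ w.length → onesIn w i l ≤ m) (hl : l ≤ w.length) :
    maxOnes w l ≤ m := by
  apply Finset.sup_le
  intro i hi
  simp only [Finset.mem_range] at hi
  exact h i (by omega)

lemma maxOnes_zero (w : List Bool) : maxOnes w 0 = 0 := by
  unfold maxOnes onesIn
  simp

lemma maxOnes_subadd (w : List Bool) {a b : ℕ} (h : a + b ≤ w.length) :
    maxOnes w (a + b) ≤ maxOnes w a + maxOnes w b := by
  apply maxOnes_le _ _ _ h
  intro i hi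
  rw [onesIn_split]
  exact add_le_add (le_maxOnes w (by omega)) (le_maxOnes w (by omega))

lemma maxOnes_mono (w : List Bool) {a b : ℕ} (hab : a ≤ b) (hb : b ≤ w.length) :
    maxOnes w a ≤ maxOnes w b := by
  apply maxOnes_le _ _ _ (le_trans hab hb)
  intro i hi
  set j := min i (w.length - b) with hj
  have hji : j ≤ i := min_le_left _ _
  have hjb : j + b ≤ w.length := by omega
  have hib : i + (b - (i - j)) ≤ j + b := by omega
  have hij : j + (i - j) = i := by omega
  calc onesIn w i a ≤ onesIn w i (b - (i - j)) := onesIn_mono w i (by omega)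
    _ ≤ onesIn w j (i - j) + onesIn w (j + (i - j)) (b - (i - j)) := by
        rw [hij]; exact le_add_self
    _ = onesIn w j ((i - j) + (b - (i - j))) := (onesIn_split w j _ _).symm
    _ = onesIn w j b := by congr 1; omega
    _ ≤ maxOnes w b := le_maxOnes w hjb

lemma maxOnes_one_le (w : List Bool) : maxOnes w 1 ≤ 1 := by
  apply Finset.sup_le
  intro i _
  exact onesIn_le w i 1

lemma eq_of_prefix_counts : ∀ (u v : List Bool), u.length = v.length →
    (∀ l, l ≤ u.length → (u.take l).count true = (v.take l).count true) → u = v := by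
  intro u
  induction u with
  | nil => intro v h _; exact (List.length_eq_zero_iff.mp h.symm).symm
  | cons a u' ih =>
    intro v hlen hcnt
    cases v with
    | nil => simp at hlen
    | cons c v' =>
      have h1 := hcnt 1 (by simp)
      simp [List.count_cons] at h1
      have hac : a = c := by
        cases a <;> cases c <;> simp_all
      subst hac
      have : u' = v' := by
        apply ih v' (by simpa using hlen)
        intro l hl
        have := hcnt (l + 1) (by simp; omega)
        simp only [List.take_succ_cons, List.count_cons] at this
        omega
      rw [this]

theorem unique_prefix_normal_form (w : List Bool) :
    ∃! w' : List Bool, w'.length = w.length ∧ IsPrefixNormal w' ∧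
      ∀ l, 1 ≤ l → l ≤ w.length → maxOnes w' l = maxOnes w l := by
  set n := w.length with hn
  set f : ℕ → ℕ := fun l => maxOnes w l with hf
  set b : ℕ → Bool := fun l => decide (f l < f (l + 1)) with hb
  set w' : List Bool := (List.range n).map b with hw'
  have hlen : w'.length = n := by simp [hw']
  -- step facts
  have hstep : ∀ l, l + 1 ≤ n → f l ≤ f (l + 1) ∧ f (l + 1) ≤ f l + 1 := by
    intro l h
    constructor
    · exact maxOnes_mono w (Nat.le_succ l) h
    · calc f (l + 1) ≤ f l + f 1 := maxOnes_subadd w h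
        _ ≤ f l + 1 := Nat.add_le_add_left (maxOnes_one_le w) _
  -- prefix counts of w'
  have htake : ∀ l, l ≤ n → w'.take l = (List.range l).map b := by
    intro l hl
    rw [hw', ← List.map_take, List.take_range, min_eq_left hl]
  have hpref : ∀ l, l ≤ n → (w'.take l).count true = f l := by
    intro l hl
    rw [htake l hl]
    induction l with
    | zero => simp; exact (maxOnes_zero w).symm
    | succ l ih =>
      rw [List.range_succ, List.map_append, List.count_append,
        ih (by omega)]
      obtain ⟨h1, h2⟩ := hstep l hl
      by_cases hc : f l < f (l + 1)
      · have : b l = true := by simp [hb, hc]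
        simp [this]
        omega
      · have : b l = false := by simp [hb, hc]
        simp [this]
        omega
  -- window counts of w'
  have hwin : ∀ i l, i + l ≤ n → f i + onesIn w' i l = f (i + l) := by
    intro i l h
    have := hpref (i + l) h
    rw [List.take_add, List.count_append, hpref i (by omega)] at this
    exact this
  have hmax : ∀ l, l ≤ n → maxOnes w' l = f l := by
    intro l hl
    apply le_antisymm
    · apply maxOnes_le _ _ _ (by rw [hlen]; exact hl)
      intro i hi
      rw [hlen] at hi
      have h1 := hwin i l hi
      have h2 : f (i + l) ≤ f i + f l := maxOnes_subadd w hi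
      omega
    · have h0 := hwin 0 l (by omega)
      rw [Nat.zero_add] at h0
      have hf0 : f 0 = 0 := maxOnes_zero w
      have : onesIn w' 0 l ≤ maxOnes w' l := le_maxOnes w' (by omega)
      omega
  refine ⟨w', ⟨hlen, ?_, ?_⟩, ?_⟩
  · intro l h1 h2
    rw [hlen] at h2
    rw [hmax l h2]
    have := hpref l h2
    unfold onesIn at this
    simpa using this
  · intro l h1 h2
    exact hmax l h2
  · rintro u ⟨hul, hupn, hueq⟩
    apply eq_of_prefix_counts u w' (by rw [hul, hlen])
    intro l hl
    rw [hul] at hl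
    rcases Nat.eq_zero_or_pos l with rfl | hpos
    · simp
    · have hu : (u.take l).count true = f l := by
        rw [hupn l hpos (by rw [hul]; exact hl), hueq l hpos hl]
      rw [hu, hpref l hl]
end
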